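/- Let ((ΔYᵢ, Dᵢ, D*ᵢ, Δξᵢ))_{i∈ℕ} be an i.i.d. sequence of copies of (ΔY, D, D*, Δξ), where ΔY is square-integrable, D, D* take values in {0,1} with 0 < P(D=1) < 1, Δξ is integrable, and ΔY = θ + τ·D* + Δξ almost surely for constants θ, τ ∈ ℝ. For each N, let D̄_N := (1/N)∑_{i<N} Dᵢ, ΔȲ_N := (1/N)∑_{i<N} ΔYᵢ, and define the OLS slope τ̂_N := [∑_{i<N}(Dᵢ−D̄_N)(ΔYᵢ−ΔȲ_N)] / [∑_{i<N}(Dᵢ−D̄_N)²] (whenever the denominator is nonzero). Then τ̂_N converges almost surely to τ·(P(D*=1 | D=1) − P(D*=1 | D=0)) + (E[Δξ | D=1] − E[Δξ | D=0]). -/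

import Mathlib

open MeasureTheory ProbabilityTheory Filter

/-- Conditional expectation of `Y` given the event `A`: `E[Y · 1_A] / P(A)`. -/
noncomputable def cexp {Ω : Type*} [MeasureSpace Ω] (Y : Ω → ℝ) (A : Set Ω) : ℝ :=
  (∫ ω in A, Y ω) / ((ℙ : Measure Ω) A).toReal

/-- Conditional probability of the event `A` given the event `B`: `P(A ∩ B) / P(B)`. -/
noncomputable def cprob {Ω : Type*} [MeasureSpace Ω] (A B : Set Ω) : ℝ :=
  ((ℙ : Measure Ω) (A ∩ B)).toReal / ((ℙ : Measure Ω) B).toReal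

private lemma slln_comp {Ω : Type*} [MeasureSpace Ω] [IsProbabilityMeasure (ℙ : Measure Ω)]
    (V : ℕ → Ω → ℝ × ℝ × ℝ × ℝ)
    (hindep : iIndepFun V (ℙ : Measure Ω))
    (hident : ∀ i, IdentDistrib (V i) (V 0) (ℙ : Measure Ω) (ℙ : Measure Ω))
    (g : ℝ × ℝ × ℝ × ℝ → ℝ) (hg : Measurable g)
    (hint : Integrable (fun ω => g (V 0 ω)) (ℙ : Measure Ω)) :
    ∀ᵐ ω ∂(ℙ : Measure Ω), Tendsto (fun N : ℕ => (∑ i ∈ Finset.range N, g (V i ω)) / N)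
      atTop (nhds (∫ ω, g (V 0 ω))) :=
  strong_law_ae_real (fun i ω => g (V i ω)) hint
    (fun _ _ hij => (hindep.indepFun hij).comp hg hg)
    (fun i => (hident i).comp hg)

private lemma sum_centered_mul {N : ℕ} (hN : (N : ℝ) ≠ 0) (f g : ℕ → ℝ) :
    ∑ i ∈ Finset.range N,
      (f i - (∑ j ∈ Finset.range N, f j) / N) * (g i - (∑ j ∈ Finset.range N, g j) / N)
      = (∑ i ∈ Finset.range N, f i * g i)
        - (∑ i ∈ Finset.range N, f i) * (∑ j ∈ Finset.range N, g j) / N := by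
  set F := (∑ j ∈ Finset.range N, f j) with hF
  set G := (∑ j ∈ Finset.range N, g j) with hG
  have h : ∀ i ∈ Finset.range N,
      (f i - F / N) * (g i - G / N)
        = f i * g i - F / N * g i - G / N * f i + F / N * (G / N) := fun i _ => by ring
  rw [Finset.sum_congr rfl h]
  simp only [Finset.sum_add_distrib, Finset.sum_sub_distrib, ← Finset.mul_sum,
    Finset.sum_const, Finset.card_range, nsmul_eq_mul, ← hF, ← hG]
  field_simp
  ring

private lemma final_algebra (θ τ p a b c d : ℝ) (hp : p ≠ 0) (hq : (1:ℝ) - p ≠ 0) :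
    ((θ*p + τ*a + c) - p*(θ + τ*(a+b) + (c+d)))/(p - p^2)
      = τ * (a/p - b/(1-p)) + (c/p - d/(1-p)) := by
  have h : p - p^2 = p*(1-p) := by ring
  rw [h]
  field_simp
  ring

theorem simple_did_ols_limit_under_misclassification
    {Ω : Type*} [MeasureSpace Ω] [IsProbabilityMeasure (ℙ : Measure Ω)]
    (V : ℕ → Ω → ℝ × ℝ × ℝ × ℝ) (θ τ : ℝ)
    (hmeas : ∀ i, Measurable (V i))
    (hindep : iIndepFun V (ℙ : Measure Ω))
    (hident : ∀ i, IdentDistrib (V i) (V 0) (ℙ : Measure Ω) (ℙ : Measure Ω))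
    (hsq : MemLp (fun ω => (V 0 ω).1) 2 (ℙ : Measure Ω))
    (hξint : Integrable (fun ω => (V 0 ω).2.2.2))
    (hDbin : ∀ i ω, (V i ω).2.1 = 0 ∨ (V i ω).2.1 = 1)
    (hDsbin : ∀ i ω, (V i ω).2.2.1 = 0 ∨ (V i ω).2.2.1 = 1)
    (hD1pos : 0 < (ℙ : Measure Ω) {ω | (V 0 ω).2.1 = 1})
    (hD1lt : (ℙ : Measure Ω) {ω | (V 0 ω).2.1 = 1} < 1)
    (hmodel : ∀ i, ∀ᵐ ω ∂(ℙ : Measure Ω),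
      (V i ω).1 = θ + τ * (V i ω).2.2.1 + (V i ω).2.2.2) :
    ∀ᵐ ω ∂(ℙ : Measure Ω), Tendsto
      (fun N : ℕ =>
        (∑ i : Fin N, ((V i ω).2.1 - (∑ j : Fin N, (V j ω).2.1) / (N : ℝ))
            * ((V i ω).1 - (∑ j : Fin N, (V j ω).1) / (N : ℝ)))
        / (∑ i : Fin N, ((V i ω).2.1 - (∑ j : Fin N, (V j ω).2.1) / (N : ℝ)) ^ 2))
      atTop
      (nhds (τ * (cprob {ω' | (V 0 ω').2.2.1 = 1} {ω' | (V 0 ω').2.1 = 1}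
              - cprob {ω' | (V 0 ω').2.2.1 = 1} {ω' | (V 0 ω').2.1 = 0})
          + (cexp (fun ω' => (V 0 ω').2.2.2) {ω' | (V 0 ω').2.1 = 1}
              - cexp (fun ω' => (V 0 ω').2.2.2) {ω' | (V 0 ω').2.1 = 0}))) := by
  classical
  have mD : Measurable fun x : ℝ × ℝ × ℝ × ℝ => x.2.1 := measurable_fst.comp measurable_snd
  have mY : Measurable fun x : ℝ × ℝ × ℝ × ℝ => x.1 := measurable_fst
  have mDY : Measurable fun x : ℝ × ℝ × ℝ × ℝ => x.2.1 * x.1 := mD.mul mY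
  set S1 : Set Ω := {ω | (V 0 ω).2.1 = 1} with hS1def
  set S0 : Set Ω := {ω | (V 0 ω).2.1 = 0} with hS0def
  set T : Set Ω := {ω | (V 0 ω).2.2.1 = 1} with hTdef
  have mS1 : MeasurableSet S1 := (mD.comp (hmeas 0)) (measurableSet_singleton 1)
  have mT : MeasurableSet T :=
    ((measurable_fst.comp (measurable_snd.comp measurable_snd)).comp (hmeas 0))
      (measurableSet_singleton 1)
  have hS0c : S0 = S1ᶜ := by
    ext ω
    simp only [hS0def, hS1def, Set.mem_setOf_eq, Set.mem_compl_iff]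
    rcases hDbin 0 ω with h | h <;> simp [h]
  -- indicator identities
  have hDind : (fun ω => (V 0 ω).2.1) = S1.indicator (fun _ => (1:ℝ)) := by
    funext ω
    rcases hDbin 0 ω with h | h
    · have hω : ω ∉ S1 := by simp [hS1def, h]
      simp [h, Set.indicator_of_notMem hω]
    · have hω : ω ∈ S1 := h
      simp [h, Set.indicator_of_mem hω]
  have hDsind : (fun ω => (V 0 ω).2.2.1) = T.indicator (fun _ => (1:ℝ)) := by
    funext ω
    rcases hDsbin 0 ω with h | h
    · have hω : ω ∉ T := by simp [hTdef, h]
      simp [h, Set.indicator_of_notMem hω]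
    · have hω : ω ∈ T := h
      simp [h, Set.indicator_of_mem hω]
  have hDDsind : (fun ω => (V 0 ω).2.1 * (V 0 ω).2.2.1) = (T ∩ S1).indicator (fun _ => (1:ℝ)) := by
    funext ω
    by_cases hω : ω ∈ T ∩ S1
    · have e1 : (V 0 ω).2.2.1 = 1 := hω.1
      have e2 : (V 0 ω).2.1 = 1 := hω.2
      rw [Set.indicator_of_mem hω, e1, e2]; norm_num
    · rw [Set.indicator_of_notMem hω]
      rcases hDsbin 0 ω with h | h
      · rw [h]; ring
      · rcases hDbin 0 ω with h2 | h2
        · rw [h2]; ring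
        · exact absurd ⟨h, h2⟩ hω
  have hDXiind : (fun ω => (V 0 ω).2.1 * (V 0 ω).2.2.2) = S1.indicator (fun ω => (V 0 ω).2.2.2) := by
    funext ω
    by_cases hω : ω ∈ S1
    · have e : (V 0 ω).2.1 = 1 := hω
      rw [Set.indicator_of_mem hω, e, one_mul]
    · have e : (V 0 ω).2.1 = 0 := (hDbin 0 ω).resolve_right hω
      rw [Set.indicator_of_notMem hω, e, zero_mul]
  -- integrability
  have intY : Integrable (fun ω => (V 0 ω).1) (ℙ : Measure Ω) := hsq.integrable one_le_two
  have intD : Integrable (fun ω => (V 0 ω).2.1) (ℙ : Measure Ω) := by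
    rw [hDind]; exact (integrable_const (1:ℝ)).indicator mS1
  have intDs : Integrable (fun ω => (V 0 ω).2.2.1) (ℙ : Measure Ω) := by
    rw [hDsind]; exact (integrable_const (1:ℝ)).indicator mT
  have intDDs : Integrable (fun ω => (V 0 ω).2.1 * (V 0 ω).2.2.1) (ℙ : Measure Ω) := by
    rw [hDDsind]; exact (integrable_const (1:ℝ)).indicator (mT.inter mS1)
  have intDXi : Integrable (fun ω => (V 0 ω).2.1 * (V 0 ω).2.2.2) (ℙ : Measure Ω) := by
    rw [hDXiind]; exact hξint.indicator mS1
  have hDabs : ∀ ω, |(V 0 ω).2.1| ≤ 1 := by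
    intro ω; rcases hDbin 0 ω with h | h <;> simp [h]
  have intDY : Integrable (fun ω => (V 0 ω).2.1 * (V 0 ω).1) (ℙ : Measure Ω) := by
    refine intY.mono ((mDY.comp (hmeas 0)).aestronglyMeasurable) ?_
    filter_upwards with ω
    rw [Real.norm_eq_abs, Real.norm_eq_abs, abs_mul]
    nlinarith [hDabs ω, abs_nonneg ((V 0 ω).1), abs_nonneg ((V 0 ω).2.1)]
  -- integral values
  set p := ((ℙ : Measure Ω) S1).toReal with hpdef
  set a := ((ℙ : Measure Ω) (T ∩ S1)).toReal with hadef
  set b := ((ℙ : Measure Ω) (T ∩ S0)).toReal with hbdef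
  set c := (∫ ω in S1, (V 0 ω).2.2.2) with hcdef
  set d := (∫ ω in S0, (V 0 ω).2.2.2) with hddef
  have hppos : 0 < p := ENNReal.toReal_pos hD1pos.ne' (measure_ne_top _ _)
  have hplt : p < 1 := by
    have h := (ENNReal.toReal_lt_toReal (measure_ne_top _ _) ENNReal.one_ne_top).2 hD1lt
    simpa using h
  have hp0 : p ≠ 0 := ne_of_gt hppos
  have hq0 : (1:ℝ) - p ≠ 0 := by nlinarith
  have hq : ((ℙ : Measure Ω) S0).toReal = 1 - p := by
    rw [hS0c, prob_compl_eq_one_sub mS1,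
      ENNReal.toReal_sub_of_le prob_le_one ENNReal.one_ne_top]
    simp [hpdef]
  have hintD_eq : ∫ ω, (V 0 ω).2.1 = p := by
    rw [hDind, integral_indicator_const _ mS1]; simp [hpdef]; rfl
  have hintDs_eq : ∫ ω, (V 0 ω).2.2.1 = ((ℙ : Measure Ω) T).toReal := by
    rw [hDsind, integral_indicator_const _ mT]; simp; rfl
  have hintDDs : ∫ ω, (V 0 ω).2.1 * (V 0 ω).2.2.1 = a := by
    rw [hDDsind, integral_indicator_const _ (mT.inter mS1)]; simp [hadef]; rfl
  have hintDXi : ∫ ω, (V 0 ω).2.1 * (V 0 ω).2.2.2 = c := by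
    rw [hDXiind, integral_indicator mS1]
  have hT_split : ((ℙ : Measure Ω) T).toReal = a + b := by
    have h1 : T ∩ S0 = T \ S1 := by rw [hS0c, Set.diff_eq]
    have h2 := measure_inter_add_diff (μ := (ℙ : Measure Ω)) T mS1
    rw [hadef, hbdef, h1, ← ENNReal.toReal_add (measure_ne_top _ _) (measure_ne_top _ _), h2]
  have hXi_split : ∫ ω, (V 0 ω).2.2.2 = c + d := by
    rw [hcdef, hddef, hS0c, integral_add_compl mS1 hξint]
  have intA : Integrable (fun ω => θ + τ * (V 0 ω).2.2.1) (ℙ : Measure Ω) :=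
    (integrable_const θ).add (intDs.const_mul τ)
  have intB : Integrable (fun ω => τ * (V 0 ω).2.2.1) (ℙ : Measure Ω) := intDs.const_mul τ
  have hmuY : ∫ ω, (V 0 ω).1 = θ + τ * (a + b) + (c + d) := by
    rw [integral_congr_ae (hmodel 0),
      integral_add intA hξint,
      integral_add (integrable_const θ) intB,
      integral_const_mul, hintDs_eq, hT_split, hXi_split, integral_const]
    simp
  have hmodelD : (fun ω => (V 0 ω).2.1 * (V 0 ω).1) =ᵐ[(ℙ : Measure Ω)]
      (fun ω => θ * (V 0 ω).2.1 + τ * ((V 0 ω).2.1 * (V 0 ω).2.2.1)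
        + (V 0 ω).2.1 * (V 0 ω).2.2.2) := by
    filter_upwards [hmodel 0] with ω hω
    rw [hω]; ring
  have intC : Integrable (fun ω => θ * (V 0 ω).2.1 + τ * ((V 0 ω).2.1 * (V 0 ω).2.2.1)) (ℙ : Measure Ω) :=
    (intD.const_mul θ).add (intDDs.const_mul τ)
  have intE : Integrable (fun ω => θ * (V 0 ω).2.1) (ℙ : Measure Ω) := intD.const_mul θ
  have intF : Integrable (fun ω => τ * ((V 0 ω).2.1 * (V 0 ω).2.2.1)) (ℙ : Measure Ω) := intDDs.const_mul τ
  have hmuDY : ∫ ω, (V 0 ω).2.1 * (V 0 ω).1 = θ * p + τ * a + c := by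
    rw [integral_congr_ae hmodelD,
      integral_add intC intDXi,
      integral_add intE intF,
      integral_const_mul, integral_const_mul, hintD_eq, hintDDs, hintDXi]
  -- strong law applications
  have hsY := slln_comp V hindep hident (fun x => x.1) mY intY
  have hsD := slln_comp V hindep hident (fun x => x.2.1) mD intD
  have hsDY := slln_comp V hindep hident (fun x => x.2.1 * x.1) mDY intDY
  rw [hintD_eq] at hsD
  rw [hmuY] at hsY
  rw [hmuDY] at hsDY
  -- target value identity
  have htarget : τ * (cprob T S1 - cprob T S0)
      + (cexp (fun ω' => (V 0 ω').2.2.2) S1 - cexp (fun ω' => (V 0 ω').2.2.2) S0)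
      = ((θ * p + τ * a + c) - p * (θ + τ * (a + b) + (c + d))) / (p - p^2) := by
    rw [final_algebra θ τ p a b c d hp0 hq0]
    simp only [cprob, cexp]
    rw [← hpdef, ← hadef, ← hbdef, ← hcdef, ← hddef, hq]
  rw [htarget]
  have hden_ne : p - p^2 ≠ 0 := by nlinarith
  filter_upwards [hsY, hsD, hsDY] with ω hωY hωD hωDY
  have hlim : Tendsto (fun N : ℕ =>
      ((∑ i ∈ Finset.range N, (V i ω).2.1 * (V i ω).1) / (N:ℝ)
        - ((∑ i ∈ Finset.range N, (V i ω).2.1) / (N:ℝ))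
            * ((∑ i ∈ Finset.range N, (V i ω).1) / (N:ℝ)))
      / ((∑ i ∈ Finset.range N, (V i ω).2.1) / (N:ℝ)
        - ((∑ i ∈ Finset.range N, (V i ω).2.1) / (N:ℝ))^2))
      atTop (nhds (((θ * p + τ * a + c) - p * (θ + τ * (a + b) + (c + d))) / (p - p^2))) :=
    Tendsto.div (hωDY.sub (hωD.mul hωY)) (hωD.sub (hωD.pow 2)) hden_ne
  refine Tendsto.congr' ?_ hlim
  filter_upwards [eventually_ge_atTop 1] with N hN
  have hN0 : (N:ℝ) ≠ 0 := by
    have : (0:ℝ) < N := by exact_mod_cast hN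
    exact ne_of_gt this
  rw [Fin.sum_univ_eq_sum_range (fun k => (V k ω).2.1) N,
      Fin.sum_univ_eq_sum_range (fun k => (V k ω).1) N]
  rw [Fin.sum_univ_eq_sum_range (fun k =>
        ((V k ω).2.1 - (∑ j ∈ Finset.range N, (V j ω).2.1) / (N:ℝ))
          * ((V k ω).1 - (∑ j ∈ Finset.range N, (V j ω).1) / (N:ℝ))) N,
      Fin.sum_univ_eq_sum_range (fun k =>
        ((V k ω).2.1 - (∑ j ∈ Finset.range N, (V j ω).2.1) / (N:ℝ)) ^ 2) N]
  rw [sum_centered_mul hN0 (fun i => (V i ω).2.1) (fun i => (V i ω).1)]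
  have hsq2 : ∀ i ∈ Finset.range N,
      ((V i ω).2.1 - (∑ j ∈ Finset.range N, (V j ω).2.1) / (N:ℝ))^2
        = ((V i ω).2.1 - (∑ j ∈ Finset.range N, (V j ω).2.1) / (N:ℝ))
          * ((V i ω).2.1 - (∑ j ∈ Finset.range N, (V j ω).2.1) / (N:ℝ)) := fun i _ => sq _
  rw [Finset.sum_congr rfl hsq2, sum_centered_mul hN0 (fun i => (V i ω).2.1) (fun i => (V i ω).2.1)]
  have hDD : ∑ i ∈ Finset.range N, (V i ω).2.1 * (V i ω).2.1
      = ∑ i ∈ Finset.range N, (V i ω).2.1 :=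
    Finset.sum_congr rfl (fun i _ => by rcases hDbin i ω with h | h <;> rw [h] <;> ring)
  rw [hDD]
  set SD := ∑ j ∈ Finset.range N, (V j ω).2.1 with hSD
  set SY := ∑ j ∈ Finset.range N, (V j ω).1 with hSY2
  set SDY := ∑ i ∈ Finset.range N, (V i ω).2.1 * (V i ω).1 with hSDY
  have hnum : SDY / (N:ℝ) - SD / (N:ℝ) * (SY / (N:ℝ)) = (SDY - SD * SY / (N:ℝ)) / (N:ℝ) := by
    field_simp
  have hden2 : SD / (N:ℝ) - (SD / (N:ℝ))^2 = (SD - SD * SD / (N:ℝ)) / (N:ℝ) := by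
    field_simp
  rw [hnum, hden2, div_div_div_comm, div_self hN0, div_div, mul_one]
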